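/- The maximal adjacency cliques of the Grassmannian 𝒢 are precisely the stars and the tops. That is, a subset 𝒜 ⊆ 𝒢 is an adjacency clique that is not properly contained in any other adjacency clique if, and only if, 𝒜 is a star or a top. -/

import Mathlib

/-- The Grassmannian `𝒢` of all subspaces `X ≤ V` with `X ≅ V/X`. -/
def Grass (K V : Type*) [DivisionRing K] [AddCommGroup V] [Module K V] :
    Set (Submodule K V) :=
  {X | Nonempty (X ≃ₗ[K] (V ⧸ X))}

variable {K V : Type*} [DivisionRing K] [AddCommGroup V] [Module K V]

/-- The dimension of the quotient `E / M` (computed as the rank of `E ⧸ (M ∩ E)`). -/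
noncomputable def quotRank (M E : Submodule K V) : Cardinal :=
  Module.rank K (E ⧸ (M.comap E.subtype))

/-- Two subspaces are adjacent if `dim (X/(X ⊓ Y)) = dim (Y/(X ⊓ Y)) = 1`. -/
def Adjacent (X Y : Submodule K V) : Prop :=
  quotRank (X ⊓ Y) X = 1 ∧ quotRank (X ⊓ Y) Y = 1

/-- Two subspaces are distant if they are complementary: `X ⊕ Y = V`. -/
def Distant (X Y : Submodule K V) : Prop := IsCompl X Y

/-- The star `𝒢[M⟩` with centre `M`. -/
def starSet (M : Submodule K V) : Set (Submodule K V) :=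
  {E | M ≤ E ∧ quotRank M E = 1}

/-- `M` is the centre of a star, i.e. there is `X ∈ 𝒢` with `M ≤ X`, `dim (X/M) = 1`. -/
def IsStarCentre (M : Submodule K V) : Prop :=
  ∃ X ∈ Grass K V, M ≤ X ∧ quotRank M X = 1

/-- The top `𝒢⟨N]` with carrier `N`. -/
def topSet (N : Submodule K V) : Set (Submodule K V) :=
  {E | E ≤ N ∧ quotRank E N = 1}

/-- `N` is the carrier of a top, i.e. there is `X ∈ 𝒢` with `X ≤ N`, `dim (N/X) = 1`. -/
def IsTopCarrier (N : Submodule K V) : Prop :=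
  ∃ X ∈ Grass K V, X ≤ N ∧ quotRank X N = 1

/-- An adjacency clique: a set of mutually adjacent elements of `𝒢`. -/
def IsAdjClique (A : Set (Submodule K V)) : Prop :=
  A ⊆ Grass K V ∧ A.Pairwise Adjacent

/-- A maximal adjacency clique. -/
def IsMaxAdjClique (A : Set (Submodule K V)) : Prop :=
  IsAdjClique A ∧ ∀ B, IsAdjClique B → A ⊆ B → A = B

/-- The pencil `𝒢[M,N] = {X ∈ 𝒢 | M < X < N}`. -/
def pencilSet (M N : Submodule K V) : Set (Submodule K V) :=
  {X ∈ Grass K V | M < X ∧ X < N}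

/-- `(M, N)` defines a pencil: there is `X ∈ 𝒢` with `M ≤ X ≤ N` and
`dim (X/M) = dim (N/X) = 1`. -/
def IsPencilPair (M N : Submodule K V) : Prop :=
  ∃ X ∈ Grass K V, M ≤ X ∧ X ≤ N ∧ quotRank M X = 1 ∧ quotRank X N = 1

/-- A pencil in `𝒢`. -/
def IsPencil (S : Set (Submodule K V)) : Prop :=
  ∃ M N : Submodule K V, IsPencilPair M N ∧ S = pencilSet M N

/-- A point is a one-dimensional subspace. -/
def IsPoint (p : Submodule K V) : Prop := Module.rank K p = 1

/-- A line is a two-dimensional subspace. -/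
def IsLine (L : Submodule K V) : Prop := Module.rank K L = 2

/-- Two subspaces meet if they have a common point, i.e. nonzero intersection. -/
def Meets (X Y : Submodule K V) : Prop := X ⊓ Y ≠ ⊥

/-- A distant clique: a set of mutually distant elements of `𝒢`. -/
def IsDistantClique (R : Set (Submodule K V)) : Prop :=
  R ⊆ Grass K V ∧ R.Pairwise Distant

/-- A set has at least three elements. -/
def HasThree (R : Set (Submodule K V)) : Prop :=
  ∃ A ∈ R, ∃ B ∈ R, ∃ C ∈ R, A ≠ B ∧ A ≠ C ∧ B ≠ C

/-- Condition (R2): if a line meets three mutually distinct elements of `R`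
then it meets all elements of `R`. -/
def MeetsThreeMeetsAll (R : Set (Submodule K V)) : Prop :=
  ∀ L : Submodule K V, IsLine L →
    ∀ E₀ ∈ R, ∀ E₁ ∈ R, ∀ E₂ ∈ R, E₀ ≠ E₁ → E₀ ≠ E₂ → E₁ ≠ E₂ →
      Meets L E₀ → Meets L E₁ → Meets L E₂ → ∀ E ∈ R, Meets L E

/-- A partial `Z`-regulus: conditions (R1) and (R2). -/
def IsPartialZRegulus (R : Set (Submodule K V)) : Prop :=
  (IsDistantClique R ∧ HasThree R) ∧ MeetsThreeMeetsAll R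

/-- A `Z`-regulus: a partial `Z`-regulus that is maximal, i.e. not properly
contained in any partial `Z`-regulus. -/
def IsZRegulus (R : Set (Submodule K V)) : Prop :=
  IsPartialZRegulus R ∧ ∀ S : Set (Submodule K V), IsPartialZRegulus S → R ⊆ S → R = S

/-- A directrix of `R`: a line meeting all elements of `R`. -/
def IsDirectrix (R : Set (Submodule K V)) (L : Submodule K V) : Prop :=
  IsLine L ∧ ∀ E ∈ R, Meets L E

/-- Condition (⊠2) from Theorem `Zreg`. -/
def BoxTwo (R : Set (Submodule K V)) : Prop :=
  ∀ E₀ ∈ R, ∀ E₁ ∈ R, ∀ E₂ ∈ R, E₀ ≠ E₁ → E₀ ≠ E₂ → E₁ ≠ E₂ →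
    ∀ W ∈ Grass K V, Adjacent W E₀ → ¬ Distant W E₁ → ¬ Distant W E₂ →
      ∀ E ∈ R, ¬ Distant W E

section AuxProofs

open Module

variable {M E F N X Y Z W : Submodule K V}

lemma quotRank_eq_one_iff_covBy (h : M ≤ E) : quotRank M E = 1 ↔ M ⋖ E := by
  simp only [quotRank]
  rw [Module.rank_eq_one_iff_finrank_eq_one, ← isSimpleModule_iff_finrank_eq_one,
    covBy_iff_quot_is_simple h]

lemma adjacent_iff_covBy : Adjacent X Y ↔ (X ⊓ Y ⋖ X ∧ X ⊓ Y ⋖ Y) := by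
  rw [Adjacent, quotRank_eq_one_iff_covBy inf_le_left, quotRank_eq_one_iff_covBy inf_le_right]

lemma quotRank_eq_rank_map (M E : Submodule K V) :
    quotRank M E = Module.rank K (E.map M.mkQ) := by
  have h1 : LinearMap.ker (M.mkQ ∘ₗ E.subtype) = M.comap E.subtype := by
    rw [LinearMap.ker_comp, Submodule.ker_mkQ]
  have h2 : LinearMap.range (M.mkQ ∘ₗ E.subtype) = E.map M.mkQ := by
    rw [LinearMap.range_comp, Submodule.range_subtype]
  have e := (M.mkQ ∘ₗ E.subtype).quotKerEquivRange
  rw [h1, h2] at e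
  exact e.rank_eq

lemma quotRank_add_rank (h : M ≤ E) :
    quotRank M E + Module.rank K M = Module.rank K E := by
  have h2 := Submodule.rank_quotient_add_rank (M.comap E.subtype)
  rw [(Submodule.comapSubtypeEquivOfLe h).rank_eq] at h2
  exact h2

lemma rank_quot_add_quotRank (h : M ≤ E) :
    Module.rank K (V ⧸ E) + quotRank M E = Module.rank K (V ⧸ M) := by
  have h2 := Submodule.rank_quotient_add_rank (E.map M.mkQ)
  rw [(Submodule.quotientQuotientEquivQuotient M E h).rank_eq, ← quotRank_eq_rank_map] at h2
  exact h2

lemma two_le_cardinal {c : Cardinal} (h0 : c ≠ 0) (h1 : c ≠ 1) : 2 ≤ c := by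
  by_contra h
  push_neg at h
  have hfin : c < Cardinal.aleph0 := h.trans (by exact_mod_cast Cardinal.nat_lt_aleph0 2)
  obtain ⟨n, rfl⟩ := Cardinal.lt_aleph0.1 hfin
  have hn : n < 2 := by exact_mod_cast h
  interval_cases n <;> simp_all

lemma mem_grass_iff_rank : X ∈ Grass K V ↔ Module.rank K X = Module.rank K (V ⧸ X) :=
  LinearEquiv.nonempty_equiv_iff_rank_eq

lemma two_le_rank_of_mem_grass (hV : 2 < Module.rank K V) (hX : X ∈ Grass K V) :
    2 ≤ Module.rank K X := by
  have hr := mem_grass_iff_rank.1 hX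
  have hq := Submodule.rank_quotient_add_rank X
  rw [← hr] at hq
  refine two_le_cardinal (fun h => ?_) (fun h => ?_)
  · rw [h, add_zero] at hq
    rw [← hq] at hV
    exact absurd hV (by simp)
  · rw [h] at hq
    rw [← hq] at hV
    norm_num at hV

lemma two_le_corank_of_mem_grass (hV : 2 < Module.rank K V) (hX : X ∈ Grass K V) :
    2 ≤ Module.rank K (V ⧸ X) := by
  rw [← mem_grass_iff_rank.1 hX]
  exact two_le_rank_of_mem_grass hV hX

lemma inf_eq_of_covBy (h1 : M ⋖ E) (h2 : M ⋖ F) (hne : E ≠ F) : E ⊓ F = M := by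
  rcases h1.wcovBy.eq_or_eq (le_inf h1.le h2.le) inf_le_left with h | h
  · exact h
  · exfalso
    have hEF : E ≤ F := le_of_eq_of_le h.symm inf_le_right
    rcases h2.wcovBy.eq_or_eq h1.le hEF with h' | h'
    · exact h1.lt.ne' h'
    · exact hne h'

lemma sup_eq_of_covBy (h1 : E ⋖ N) (h2 : F ⋖ N) (hne : E ≠ F) : E ⊔ F = N := by
  rcases h1.wcovBy.eq_or_eq le_sup_left (sup_le h1.le h2.le) with h | h
  · exfalso
    have hFE : F ≤ E := le_of_le_of_eq le_sup_right h
    rcases h2.wcovBy.eq_or_eq hFE h1.le with h' | h'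
    · exact hne h'
    · exact h1.lt.ne h'
  · exact h

lemma Adjacent.symm (h : Adjacent X Y) : Adjacent Y X := by
  rw [adjacent_iff_covBy] at h ⊢
  rw [inf_comm Y X]
  exact ⟨h.2, h.1⟩

lemma Adjacent.not_le (h : Adjacent X Y) : ¬ X ≤ Y := by
  intro hle
  have h1 := (adjacent_iff_covBy.1 h).1.lt
  rw [inf_eq_left.2 hle] at h1
  exact lt_irrefl _ h1

lemma key_lemma (hXY : Adjacent X Y) (hZX : Adjacent Z X) (hZY : Adjacent Z Y) :
    X ⊓ Y ≤ Z ∨ Z ≤ X ⊔ Y := by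
  by_cases hM : X ⊓ Y ≤ Z
  · exact Or.inl hM
  · right
    obtain ⟨hMX, _hMY⟩ := adjacent_iff_covBy.1 hXY
    obtain ⟨hZXZ, hZXX⟩ := adjacent_iff_covBy.1 hZX
    obtain ⟨hZYZ, _hZYY⟩ := adjacent_iff_covBy.1 hZY
    have hne : Z ⊓ X ≠ Z ⊓ Y := by
      intro he
      have h1 : Z ⊓ X ≤ X ⊓ Y := le_inf inf_le_right (le_of_eq_of_le he inf_le_right)
      rcases hZXX.wcovBy.eq_or_eq h1 inf_le_left with h | h
      · exact hM (le_of_eq_of_le h inf_le_left)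
      · exact hMX.lt.ne h
    calc Z = (Z ⊓ X) ⊔ (Z ⊓ Y) := (sup_eq_of_covBy hZXZ hZYZ hne).symm
      _ ≤ X ⊔ Y := sup_le_sup inf_le_right inf_le_right

lemma covBy_sup_span {v : V} (hv : v ∉ M) : M ⋖ M ⊔ Submodule.span K {v} := by
  rw [← quotRank_eq_one_iff_covBy le_sup_left, quotRank_eq_rank_map]
  rw [Submodule.map_sup, Submodule.mkQ_map_self, bot_sup_eq, Submodule.map_span,
    Set.image_singleton]
  have hv0 : M.mkQ v ≠ 0 := by
    rw [Submodule.mkQ_apply, Ne, Submodule.Quotient.mk_eq_zero]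
    exact hv
  rw [Module.rank_eq_one_iff_finrank_eq_one]
  exact finrank_span_singleton hv0

lemma exists_covBy_not_mem {x : V} (hx : x ∈ X) (hx0 : x ≠ 0) :
    ∃ M : Submodule K V, M ⋖ X ∧ x ∉ M := by
  have hx' : (⟨x, hx⟩ : X) ≠ 0 := by
    simp only [Ne, Submodule.mk_eq_zero]
    exact hx0
  obtain ⟨q, hq⟩ := Submodule.exists_isCompl (Submodule.span K {(⟨x, hx⟩ : X)})
  refine ⟨q.map X.subtype, ?_, ?_⟩
  · rw [← quotRank_eq_one_iff_covBy (Submodule.map_subtype_le X q)]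
    have hc : (q.map X.subtype).comap X.subtype = q := by
      rw [Submodule.comap_map_eq, Submodule.ker_subtype, sup_bot_eq]
    simp only [quotRank]
    rw [hc, (Submodule.quotientEquivOfIsCompl _ _ hq.symm).rank_eq,
      Module.rank_eq_one_iff_finrank_eq_one]
    exact finrank_span_singleton hx'
  · intro hmem
    obtain ⟨y, hyq, hyx⟩ := Submodule.mem_map.1 hmem
    have hy : y = (⟨x, hx⟩ : X) := Subtype.ext hyx
    have hmem2 : (⟨x, hx⟩ : X) ∈ Submodule.span K {(⟨x, hx⟩ : X)} ⊓ q :=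
      ⟨Submodule.mem_span_singleton_self _, hy ▸ hyq⟩
    rw [hq.inf_eq_bot] at hmem2
    exact hx' (by simpa using hmem2)

lemma mem_starSet_iff : E ∈ starSet M ↔ M ⋖ E :=
  ⟨fun h => (quotRank_eq_one_iff_covBy h.1).1 h.2,
   fun h => ⟨h.le, (quotRank_eq_one_iff_covBy h.le).2 h⟩⟩

lemma mem_topSet_iff : E ∈ topSet N ↔ E ⋖ N :=
  ⟨fun h => (quotRank_eq_one_iff_covBy h.1).1 h.2,
   fun h => ⟨h.le, (quotRank_eq_one_iff_covBy h.le).2 h⟩⟩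

lemma mem_grass_of_covBy_covBy (hXG : X ∈ Grass K V) (h1 : M ⋖ X) (h2 : M ⋖ E) :
    E ∈ Grass K V := by
  rw [mem_grass_iff_rank] at hXG ⊢
  have q1 : quotRank M X = 1 := (quotRank_eq_one_iff_covBy h1.le).2 h1
  have q2 : quotRank M E = 1 := (quotRank_eq_one_iff_covBy h2.le).2 h2
  have r1 := quotRank_add_rank h1.le; rw [q1] at r1
  have r2 := quotRank_add_rank h2.le; rw [q2] at r2
  have c1 := rank_quot_add_quotRank h1.le; rw [q1] at c1
  have c2 := rank_quot_add_quotRank h2.le; rw [q2] at c2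
  have hrank : Module.rank K E = Module.rank K X := r2.symm.trans r1
  have hcor : Module.rank K (V ⧸ E) = Module.rank K (V ⧸ X) :=
    Cardinal.add_one_inj.1 (c2.trans c1.symm)
  rw [hrank, hcor]
  exact hXG

lemma mem_grass_of_covBy_covBy' (hXG : X ∈ Grass K V) (h1 : X ⋖ N) (h2 : E ⋖ N) :
    E ∈ Grass K V := by
  rw [mem_grass_iff_rank] at hXG ⊢
  have q1 : quotRank X N = 1 := (quotRank_eq_one_iff_covBy h1.le).2 h1
  have q2 : quotRank E N = 1 := (quotRank_eq_one_iff_covBy h2.le).2 h2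
  have r1 := quotRank_add_rank h1.le; rw [q1] at r1
  have r2 := quotRank_add_rank h2.le; rw [q2] at r2
  have c1 := rank_quot_add_quotRank h1.le; rw [q1] at c1
  have c2 := rank_quot_add_quotRank h2.le; rw [q2] at c2
  have hrank : Module.rank K E = Module.rank K X := by
    have h3 := r2.trans r1.symm
    rwa [add_comm (1 : Cardinal), add_comm (1 : Cardinal) (Module.rank K X),
      Cardinal.add_one_inj] at h3
  have hcor : Module.rank K (V ⧸ E) = Module.rank K (V ⧸ X) := c2.symm.trans c1
  rw [hrank, hcor]
  exact hXG

lemma isAdjClique_starSet (hM : IsStarCentre M) : IsAdjClique (starSet M) := by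
  obtain ⟨X, hXG, hMX, hq⟩ := hM
  have hMX' : M ⋖ X := (quotRank_eq_one_iff_covBy hMX).1 hq
  refine ⟨fun E hE => mem_grass_of_covBy_covBy hXG hMX' (mem_starSet_iff.1 hE), ?_⟩
  intro E hE F hF hne
  have hE' := mem_starSet_iff.1 hE
  have hF' := mem_starSet_iff.1 hF
  rw [adjacent_iff_covBy, inf_eq_of_covBy hE' hF' hne]
  exact ⟨hE', hF'⟩

lemma isAdjClique_topSet (hN : IsTopCarrier N) : IsAdjClique (topSet N) := by
  obtain ⟨X, hXG, hXN, hq⟩ := hN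
  have hXN' : X ⋖ N := (quotRank_eq_one_iff_covBy hXN).1 hq
  refine ⟨fun E hE => mem_grass_of_covBy_covBy' hXG hXN' (mem_topSet_iff.1 hE), ?_⟩
  intro E hE F hF hne
  have hE' := mem_topSet_iff.1 hE
  have hF' := mem_topSet_iff.1 hF
  have hsup : E ⊔ F = N := sup_eq_of_covBy hE' hF' hne
  rw [adjacent_iff_covBy]
  constructor
  · exact inf_covBy_of_covBy_sup_right (by rw [hsup]; exact hF')
  · exact inf_covBy_of_covBy_sup_left (by rw [hsup]; exact hE')

lemma rank_quotient_top_eq_zero : Module.rank K (V ⧸ (⊤ : Submodule K V)) = 0 :=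
  rank_zero_iff.2 (Submodule.Quotient.subsingleton_iff.2 rfl)
lemma star_subset_of_clique (hV : 2 < Module.rank K V) (hM : IsStarCentre M)
    {B : Set (Submodule K V)} (hB : IsAdjClique B) (hsub : starSet M ⊆ B) :
    B ⊆ starSet M := by
  obtain ⟨X, hXG, hMX, hq⟩ := hM
  have hMX' : M ⋖ X := (quotRank_eq_one_iff_covBy hMX).1 hq
  have hXstar : X ∈ starSet M := mem_starSet_iff.2 hMX'
  intro W hW
  by_cases hMW : M ≤ W
  · by_cases hWX : W = X
    · rw [hWX]; exact hXstar
    · have hadj : Adjacent X W := hB.2 (hsub hXstar) hW (fun h => hWX h.symm)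
      obtain ⟨h1, h2⟩ := adjacent_iff_covBy.1 hadj
      rcases hMX'.wcovBy.eq_or_eq (le_inf hMX hMW) inf_le_left with h | h
      · rw [h] at h2; exact mem_starSet_iff.2 h2
      · exfalso; rw [h] at h1; exact lt_irrefl _ h1.lt
  · exfalso
    have hcor := two_le_corank_of_mem_grass hV hXG
    have hXtop : X ≠ ⊤ := by
      intro h
      rw [h, rank_quotient_top_eq_zero] at hcor
      exact absurd hcor (by norm_num)
    obtain ⟨v, -, hvX⟩ := SetLike.exists_of_lt (lt_top_iff_ne_top.2 hXtop : X < ⊤)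
    have hvM : v ∉ M := fun h => hvX (hMX h)
    have hME2 : M ⋖ M ⊔ Submodule.span K {v} := covBy_sup_span hvM
    set E2 := M ⊔ Submodule.span K {v} with hE2def
    have hE2star : E2 ∈ starSet M := mem_starSet_iff.2 hME2
    have hvE2 : v ∈ E2 := (le_sup_right : _ ≤ E2) (Submodule.mem_span_singleton_self v)
    have hE2X : E2 ≠ X := fun h => hvX (by rw [← h]; exact hvE2)
    have hWX : W ≠ X := fun h => hMW (by rw [h]; exact hMX)
    have hWE2 : W ≠ E2 := fun h => hMW (by rw [h]; exact hME2.le)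
    have hadj12 : Adjacent X E2 := hB.2 (hsub hXstar) (hsub hE2star) (fun h => hE2X h.symm)
    have hadjWX : Adjacent W X := hB.2 hW (hsub hXstar) hWX
    have hadjWE2 : Adjacent W E2 := hB.2 hW (hsub hE2star) hWE2
    have hinf : X ⊓ E2 = M := inf_eq_of_covBy hMX' hME2 (fun hh => hE2X hh.symm)
    rcases key_lemma hadj12 hadjWX hadjWE2 with h | h
    · rw [hinf] at h; exact hMW h
    · have hXN' : X ⋖ X ⊔ E2 := covBy_sup_of_inf_covBy_right (by rw [hinf]; exact hME2)
      have hcN' := rank_quot_add_quotRank hXN'.le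
      rw [(quotRank_eq_one_iff_covBy hXN'.le).2 hXN'] at hcN'
      have hN'top : X ⊔ E2 ≠ ⊤ := by
        intro ht
        rw [ht, rank_quotient_top_eq_zero, zero_add] at hcN'
        rw [← hcN'] at hcor
        exact absurd hcor (by norm_num)
      obtain ⟨w, -, hwN'⟩ := SetLike.exists_of_lt (lt_top_iff_ne_top.2 hN'top : X ⊔ E2 < ⊤)
      have hwM : w ∉ M := fun hh => hwN' ((le_trans hMX (le_sup_left : X ≤ X ⊔ E2)) hh)
      have hME3 : M ⋖ M ⊔ Submodule.span K {w} := covBy_sup_span hwM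
      set E3 := M ⊔ Submodule.span K {w} with hE3def
      have hE3star : E3 ∈ starSet M := mem_starSet_iff.2 hME3
      have hwE3 : w ∈ E3 := (le_sup_right : _ ≤ E3) (Submodule.mem_span_singleton_self w)
      have hWE3 : W ≠ E3 := fun hh => hwN' (h (by rw [hh]; exact hwE3))
      have hadjWE3 : Adjacent W E3 := hB.2 hW (hsub hE3star) hWE3
      obtain ⟨hc1, hc2⟩ := adjacent_iff_covBy.1 hadjWE3
      have hne3 : W ⊓ E3 ≠ M := fun hh => hMW (by rw [← hh]; exact inf_le_left)
      have hsup3 : (W ⊓ E3) ⊔ M = E3 := sup_eq_of_covBy hc2 hME3 hne3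
      have hE3le : E3 ≤ X ⊔ E2 := by
        rw [← hsup3]
        exact sup_le (le_trans inf_le_left h) (le_trans hMX le_sup_left)
      exact hwN' (hE3le hwE3)

lemma top_subset_of_clique (hV : 2 < Module.rank K V) (hN : IsTopCarrier N)
    {B : Set (Submodule K V)} (hB : IsAdjClique B) (hsub : topSet N ⊆ B) :
    B ⊆ topSet N := by
  obtain ⟨X, hXG, hXN, hq⟩ := hN
  have hXN' : X ⋖ N := (quotRank_eq_one_iff_covBy hXN).1 hq
  have hXtop : X ∈ topSet N := mem_topSet_iff.2 hXN'
  intro W hW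
  by_cases hWX : W = X
  · rw [hWX]; exact hXtop
  by_cases hWN : W ≤ N
  · have hadjWX : Adjacent W X := hB.2 hW (hsub hXtop) hWX
    have hsupWX : W ⊔ X = N := by
      rcases hXN'.wcovBy.eq_or_eq le_sup_right (sup_le hWN hXN'.le) with hh | hh
      · exfalso; exact hadjWX.not_le (by rw [← hh]; exact le_sup_left)
      · exact hh
    have hcov : W ⋖ W ⊔ X := covBy_sup_of_inf_covBy_right (adjacent_iff_covBy.1 hadjWX).2
    rw [hsupWX] at hcov
    exact mem_topSet_iff.2 hcov
  · exfalso
    have hrk := two_le_rank_of_mem_grass hV hXG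
    have hXbot : X ≠ ⊥ := by
      intro hh
      rw [hh, rank_bot] at hrk
      exact absurd hrk (by norm_num)
    obtain ⟨x, hxX, hx0⟩ := (Submodule.ne_bot_iff X).1 hXbot
    obtain ⟨E2, hE2N, hxE2⟩ := exists_covBy_not_mem (hXN'.le hxX) hx0
    have hE2top : E2 ∈ topSet N := mem_topSet_iff.2 hE2N
    have hE2X : E2 ≠ X := fun hh => hxE2 (by rw [hh]; exact hxX)
    have hWE2 : W ≠ E2 := fun hh => hWN (by rw [hh]; exact hE2N.le)
    have hadjXE2 : Adjacent X E2 := hB.2 (hsub hXtop) (hsub hE2top) (fun hh => hE2X hh.symm)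
    have hadjWX : Adjacent W X := hB.2 hW (hsub hXtop) hWX
    have hadjWE2 : Adjacent W E2 := hB.2 hW (hsub hE2top) hWE2
    have hsupXE2 : X ⊔ E2 = N := sup_eq_of_covBy hXN' hE2N (fun hh => hE2X hh.symm)
    rcases key_lemma hadjXE2 hadjWX hadjWE2 with h | h
    swap
    · rw [hsupXE2] at h; exact hWN h
    have hM'X : X ⊓ E2 ⋖ X := inf_covBy_of_covBy_sup_right (by rw [hsupXE2]; exact hE2N)
    have hr := quotRank_add_rank hM'X.le
    rw [(quotRank_eq_one_iff_covBy hM'X.le).2 hM'X] at hr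
    have hM'bot : X ⊓ E2 ≠ ⊥ := by
      intro hh
      rw [hh, rank_bot, add_zero] at hr
      rw [← hr] at hrk
      exact absurd hrk (by norm_num)
    obtain ⟨u, huM', hu0⟩ := (Submodule.ne_bot_iff _).1 hM'bot
    have huN : u ∈ N := hXN'.le ((inf_le_left : X ⊓ E2 ≤ X) huM')
    obtain ⟨E3, hE3N, huE3⟩ := exists_covBy_not_mem huN hu0
    have hE3top : E3 ∈ topSet N := mem_topSet_iff.2 hE3N
    have hXE3 : X ≠ E3 := fun hh => huE3 (by rw [← hh]; exact (inf_le_left : X ⊓ E2 ≤ X) huM')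
    have hWE3 : W ≠ E3 := fun hh => hWN (by rw [hh]; exact hE3N.le)
    have hadjXE3 : Adjacent X E3 := hB.2 (hsub hXtop) (hsub hE3top) hXE3
    have hadjWE3 : Adjacent W E3 := hB.2 hW (hsub hE3top) hWE3
    have hsupXE3 : X ⊔ E3 = N := sup_eq_of_covBy hXN' hE3N hXE3
    rcases key_lemma hadjXE3 hadjWX hadjWE3 with h3 | h3
    swap
    · rw [hsupXE3] at h3; exact hWN h3
    have hM'E3X : X ⊓ E3 ⋖ X := inf_covBy_of_covBy_sup_right (by rw [hsupXE3]; exact hE3N)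
    have hneM' : X ⊓ E3 ≠ X ⊓ E2 := fun hh => huE3 ((inf_le_right : X ⊓ E3 ≤ E3) (by rw [hh]; exact huM'))
    have hXle : X ≤ W := by
      rw [← sup_eq_of_covBy hM'E3X hM'X hneM']
      exact sup_le h3 h
    exact hadjWX.symm.not_le hXle
end AuxProofs

/-- Proposition 2.4. The maximal adjacency cliques of `𝒢` are
precisely the stars and the tops. -/
theorem maxAdjClique_iff_star_or_top (hV : 2 < Module.rank K V) (hG : (Grass K V).Nonempty)
    (A : Set (Submodule K V)) :
    IsMaxAdjClique A ↔
      ((∃ M : Submodule K V, IsStarCentre M ∧ A = starSet M) ∨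
       (∃ N : Submodule K V, IsTopCarrier N ∧ A = topSet N)) := by
  constructor
  · rintro ⟨hclique, hmax⟩
    rcases Set.eq_empty_or_nonempty A with rfl | ⟨X, hXA⟩
    · exfalso
      obtain ⟨X0, hX0⟩ := hG
      have h1 : IsAdjClique {X0} := ⟨Set.singleton_subset_iff.2 hX0, Set.pairwise_singleton _ _⟩
      have h2 := hmax {X0} h1 (Set.empty_subset _)
      exact Set.singleton_ne_empty X0 h2.symm
    have hXG : X ∈ Grass K V := hclique.1 hXA
    by_cases hsing : ∀ Y ∈ A, Y = X
    · have hrk := two_le_rank_of_mem_grass hV hXG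
      have hXbot : X ≠ ⊥ := by
        intro hh
        rw [hh, rank_bot] at hrk
        exact absurd hrk (by norm_num)
      obtain ⟨x, hxX, hx0⟩ := (Submodule.ne_bot_iff X).1 hXbot
      obtain ⟨M, hMX, -⟩ := exists_covBy_not_mem hxX hx0
      have hMc : IsStarCentre M := ⟨X, hXG, hMX.le, (quotRank_eq_one_iff_covBy hMX.le).2 hMX⟩
      left
      refine ⟨M, hMc, hmax _ (isAdjClique_starSet hMc) ?_⟩
      intro Y hY
      rw [hsing Y hY]
      exact mem_starSet_iff.2 hMX
    · push_neg at hsing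
      obtain ⟨Y, hYA, hYX⟩ := hsing
      have hadjXY : Adjacent X Y := hclique.2 hXA hYA (fun h => hYX h.symm)
      obtain ⟨hMX, hMY⟩ := adjacent_iff_covBy.1 hadjXY
      have hXN : X ⋖ X ⊔ Y := covBy_sup_of_inf_covBy_right hMY
      have hYN : Y ⋖ X ⊔ Y := covBy_sup_of_inf_covBy_left hMX
      by_cases hall : ∀ Z ∈ A, X ⊓ Y ≤ Z
      · left
        have hMc : IsStarCentre (X ⊓ Y) :=
          ⟨X, hXG, hMX.le, (quotRank_eq_one_iff_covBy hMX.le).2 hMX⟩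
        refine ⟨X ⊓ Y, hMc, hmax _ (isAdjClique_starSet hMc) ?_⟩
        intro Z hZ
        by_cases hZX : Z = X
        · rw [hZX]; exact mem_starSet_iff.2 hMX
        · have hadj : Adjacent X Z := hclique.2 hXA hZ (fun h => hZX h.symm)
          obtain ⟨h1, h2⟩ := adjacent_iff_covBy.1 hadj
          rcases hMX.wcovBy.eq_or_eq (le_inf inf_le_left (hall Z hZ)) inf_le_left with h | h
          · rw [h] at h2; exact mem_starSet_iff.2 h2
          · exfalso; rw [h] at h1; exact lt_irrefl _ h1.lt
      · right
        push_neg at hall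
        obtain ⟨Z₀, hZ₀A, hMZ₀⟩ := hall
        have hNc : IsTopCarrier (X ⊔ Y) :=
          ⟨X, hXG, hXN.le, (quotRank_eq_one_iff_covBy hXN.le).2 hXN⟩
        refine ⟨X ⊔ Y, hNc, hmax _ (isAdjClique_topSet hNc) ?_⟩
        have hZ₀X : Z₀ ≠ X := fun h => hMZ₀ (by rw [h]; exact inf_le_left)
        have hZ₀Y : Z₀ ≠ Y := fun h => hMZ₀ (by rw [h]; exact inf_le_right)
        have hadjXZ₀ : Adjacent X Z₀ := hclique.2 hXA hZ₀A (fun h => hZ₀X h.symm)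
        have hadjYZ₀ : Adjacent Y Z₀ := hclique.2 hYA hZ₀A (fun h => hZ₀Y h.symm)
        have hZ₀N : Z₀ ≤ X ⊔ Y := by
          rcases key_lemma hadjXY hadjXZ₀.symm hadjYZ₀.symm with h | h
          · exact absurd h hMZ₀
          · exact h
        have hsupXZ₀ : X ⊔ Z₀ = X ⊔ Y := by
          rcases hXN.wcovBy.eq_or_eq le_sup_left (sup_le hXN.le hZ₀N) with h | h
          · exfalso; exact hadjXZ₀.symm.not_le (by rw [← h]; exact le_sup_right)
          · exact h
        intro W hWA
        have hWN : W ≤ X ⊔ Y := by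
          by_cases hWX : W = X
          · rw [hWX]; exact hXN.le
          by_cases hWY : W = Y
          · rw [hWY]; exact hYN.le
          have hadjWX : Adjacent W X := hclique.2 hWA hXA hWX
          have hadjWY : Adjacent W Y := hclique.2 hWA hYA hWY
          by_cases hMW : X ⊓ Y ≤ W
          · by_cases hWZ₀ : W = Z₀
            · rw [hWZ₀]; exact hZ₀N
            have hadjWZ₀ : Adjacent W Z₀ := hclique.2 hWA hZ₀A hWZ₀
            rcases key_lemma hadjXZ₀ hadjWX hadjWZ₀ with h | h
            · exfalso
              have hXZ₀X : X ⊓ Z₀ ⋖ X := (adjacent_iff_covBy.1 hadjXZ₀).1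
              have hne : X ⊓ Z₀ ≠ X ⊓ Y :=
                fun hh => hMZ₀ (by rw [← hh]; exact (inf_le_right : X ⊓ Z₀ ≤ Z₀))
              have hXleW : X ≤ W := by
                rw [← sup_eq_of_covBy hXZ₀X hMX hne]
                exact sup_le h hMW
              exact hadjWX.symm.not_le hXleW
            · rw [hsupXZ₀] at h; exact h
          · rcases key_lemma hadjXY hadjWX hadjWY with h | h
            · exact absurd h hMW
            · exact h
        by_cases hWX : W = X
        · rw [hWX]; exact mem_topSet_iff.2 hXN
        have hadjWX : Adjacent W X := hclique.2 hWA hXA hWX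
        have hsupWX : W ⊔ X = X ⊔ Y := by
          rcases hXN.wcovBy.eq_or_eq le_sup_right (sup_le hWN hXN.le) with h | h
          · exfalso; exact hadjWX.not_le (by rw [← h]; exact le_sup_left)
          · exact h
        have hcov : W ⋖ W ⊔ X := covBy_sup_of_inf_covBy_right (adjacent_iff_covBy.1 hadjWX).2
        rw [hsupWX] at hcov
        exact mem_topSet_iff.2 hcov
  · rintro (⟨M, hM, rfl⟩ | ⟨N, hN, rfl⟩)
    · exact ⟨isAdjClique_starSet hM, fun B hB hsub =>
        Set.Subset.antisymm hsub (star_subset_of_clique hV hM hB hsub)⟩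
    · exact ⟨isAdjClique_topSet hN, fun B hB hsub =>
        Set.Subset.antisymm hsub (top_subset_of_clique hV hN hB hsub)⟩
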